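/- Let G = ⟨a, b | [a², b²] = 1⟩. For every nontrivial character ξ : G → ℂ*, writing s = ξ(a) and t = ξ(b), one has dim_ℂ H¹(G; ℂ_ξ) = 1 if s = −1 or t = −1, and dim_ℂ H¹(G; ℂ_ξ) = 0 otherwise. -/

import Mathlib

/-- the one-dimensional representation `ℂ_ξ` attached to a character `ξ : G → ℂ*` -/
noncomputable def charRep {G : Type} [Group G] (ξ : G →* ℂˣ) : Rep ℂ G :=
  Rep.of
    { toFun := fun g => (ξ g : ℂ) • (LinearMap.id : ℂ →ₗ[ℂ] ℂ)
      map_one' := by simp [Module.End.one_eq_id]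
      map_mul' := fun g h => by
        ext
        simp [mul_smul, Module.End.mul_apply, mul_comm] }

/-- `dim_ℂ H¹(G; ℂ_ξ)` -/
noncomputable def h1dim {G : Type} [Group G] (ξ : G →* ℂˣ) : ℕ :=
  Module.finrank ℂ (groupCohomology (charRep ξ) 1)

/-- the two generators `a, b` -/
inductive GenTwo : Type
  | a | b

open scoped commutatorElement in
/-- the single relator `[a², b²]` -/
def relsTwo : Set (FreeGroup GenTwo) :=
  { ⁅FreeGroup.of GenTwo.a ^ 2, FreeGroup.of GenTwo.b ^ 2⁆ }

open scoped commutatorElement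

/-- The affine group of ℂ: pairs (x, u) acting as z ↦ x + u z. -/
@[ext] structure Aff : Type where
  x : ℂ
  u : ℂˣ

namespace Aff

instance : Mul Aff := ⟨fun p q => ⟨p.x + (p.u : ℂ) * q.x, p.u * q.u⟩⟩
instance : One Aff := ⟨⟨0, 1⟩⟩
instance : Inv Aff := ⟨fun p => ⟨-(((p.u⁻¹ : ℂˣ) : ℂ) * p.x), p.u⁻¹⟩⟩

@[simp] lemma mul_x (p q : Aff) : (p * q).x = p.x + (p.u : ℂ) * q.x := rfl
@[simp] lemma mul_u (p q : Aff) : (p * q).u = p.u * q.u := rfl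
@[simp] lemma one_x : (1 : Aff).x = 0 := rfl
@[simp] lemma one_u : (1 : Aff).u = 1 := rfl
@[simp] lemma inv_x (p : Aff) : (p⁻¹).x = -(((p.u⁻¹ : ℂˣ) : ℂ) * p.x) := rfl
@[simp] lemma inv_u (p : Aff) : (p⁻¹).u = p.u⁻¹ := rfl

instance : Group Aff where
  mul_assoc p q r := by ext <;> simp <;> ring
  one_mul p := by ext <;> simp
  mul_one p := by ext <;> simp
  inv_mul_cancel p := by
    ext
    · simp [Units.val_inv_eq_inv_val]
    · simp

/-- projection to the linear part -/
def proj : Aff →* ℂˣ where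
  toFun := Aff.u
  map_one' := rfl
  map_mul' _ _ := rfl

@[simp] lemma proj_apply (p : Aff) : proj p = p.u := rfl

lemma commutator_sq_eq_one (x y : ℂ) (s t : ℂˣ)
    (h : (1 + (s:ℂ)) * (1 - (t:ℂ)^2) * x + (1 + (t:ℂ)) * ((s:ℂ)^2 - 1) * y = 0) :
    ⁅(⟨x, s⟩ : Aff)^2, (⟨y, t⟩ : Aff)^2⁆ = 1 := by
  rw [commutatorElement_eq_one_iff_commute]
  show _ = _
  ext
  · simp [sq]
    linear_combination h
  · simp [sq]
    ring

end Aff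

namespace CVTG

open groupCohomology

abbrev G := PresentedGroup relsTwo

noncomputable abbrev ga : G := PresentedGroup.of GenTwo.a
noncomputable abbrev gb : G := PresentedGroup.of GenTwo.b

lemma rel_comm : ga ^ 2 * gb ^ 2 = gb ^ 2 * ga ^ 2 := by
  have h : (⁅FreeGroup.of GenTwo.a ^ 2, FreeGroup.of GenTwo.b ^ 2⁆ : FreeGroup GenTwo)
      ∈ Subgroup.normalClosure relsTwo :=
    Subgroup.subset_normalClosure rfl
  have h2 : PresentedGroup.mk relsTwo ⁅FreeGroup.of GenTwo.a ^ 2, FreeGroup.of GenTwo.b ^ 2⁆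
      = 1 := (QuotientGroup.eq_one_iff _).2 h
  rw [map_commutatorElement, map_pow, map_pow] at h2
  exact (commutatorElement_eq_one_iff_commute.1 h2).eq

variable (ξ : G →* ℂˣ)

lemma xi_eq_one (h1 : ξ ga = 1) (h2 : ξ gb = 1) : ∀ g, ξ g = 1 := by
  intro g
  exact PresentedGroup.generated_by relsTwo ξ.ker
    (fun j => by cases j; exacts [h1, h2]) g

/-- identity on the carrier of `charRep ξ`, viewed as `ℂ` -/
abbrev toC : (charRep ξ) → ℂ := fun v => v

/-- the underlying `ℂ`-valued function of a 1-cocycle -/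
def cval (f : cocycles₁ (charRep ξ)) : G → ℂ := f.1

lemma cval_injective : Function.Injective (cval ξ) := fun f g h => Subtype.ext h

lemma cocycle_mul (f : cocycles₁ (charRep ξ)) (g h : G) :
    cval ξ f (g * h) = (ξ g : ℂ) * cval ξ f h + cval ξ f g :=
  (mem_cocycles₁_iff (A := charRep ξ) f.1).1 f.2 g h

lemma cocycle_one (f : cocycles₁ (charRep ξ)) : cval ξ f 1 = 0 :=
  cocycles₁_map_one f

lemma cocycle_inv (f : cocycles₁ (charRep ξ)) (g : G) :
    (ξ g : ℂ) * cval ξ f g⁻¹ = -cval ξ f g := by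
  have h := cocycle_mul ξ f g g⁻¹
  rw [mul_inv_cancel, cocycle_one] at h
  linear_combination -h

/-- evaluation of 1-cocycles at the two generators -/
noncomputable def evalMap : cocycles₁ (charRep ξ) →ₗ[ℂ] ℂ × ℂ where
  toFun f := (cval ξ f ga, cval ξ f gb)
  map_add' f g := rfl
  map_smul' c f := rfl

lemma evalMap_injective : Function.Injective (evalMap ξ) := by
  intro f g hfg
  have h1 : cval ξ f ga = cval ξ g ga := congrArg Prod.fst hfg
  have h2 : cval ξ f gb = cval ξ g gb := congrArg Prod.snd hfg
  refine cval_injective ξ (funext fun z => ?_)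
  set S : Subgroup G :=
    { carrier := {z | cval ξ f z = cval ξ g z}
      one_mem' := by
        show cval ξ f 1 = cval ξ g 1
        rw [cocycle_one, cocycle_one]
      mul_mem' := by
        intro z w hz hw
        show cval ξ f (z * w) = cval ξ g (z * w)
        rw [cocycle_mul, cocycle_mul]
        rw [Set.mem_setOf_eq] at hz hw
        rw [hz, hw]
      inv_mem' := by
        intro z hz
        show cval ξ f z⁻¹ = cval ξ g z⁻¹
        rw [Set.mem_setOf_eq] at hz
        apply mul_left_cancel₀ (Units.ne_zero (ξ z))
        rw [cocycle_inv, cocycle_inv, hz] }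
  exact PresentedGroup.generated_by relsTwo S
    (fun j => by cases j; exacts [h1, h2]) z


noncomputable def sC : ℂ := ξ ga
noncomputable def tC : ℂ := ξ gb

/-- the Fox-derivative linear functional of the relator -/
noncomputable def ellMap : ℂ × ℂ →ₗ[ℂ] ℂ :=
  ((1 + sC ξ) * (1 - tC ξ ^ 2)) • LinearMap.fst ℂ ℂ ℂ +
    ((1 + tC ξ) * (sC ξ ^ 2 - 1)) • LinearMap.snd ℂ ℂ ℂ

lemma ellMap_apply (x y : ℂ) :
    ellMap ξ (x, y) = (1 + sC ξ) * (1 - tC ξ ^ 2) * x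
      + (1 + tC ξ) * (sC ξ ^ 2 - 1) * y := rfl

lemma range_evalMap : LinearMap.range (evalMap ξ) = LinearMap.ker (ellMap ξ) := by
  apply le_antisymm
  · rintro v ⟨f, rfl⟩
    have e := congrArg (cval ξ f) rel_comm
    simp only [sq, cocycle_mul, map_mul, Units.val_mul] at e
    show ellMap ξ (cval ξ f ga, cval ξ f gb) = 0
    rw [ellMap_apply, sC, tC]
    linear_combination e
  · rintro ⟨x, y⟩ hv
    rw [LinearMap.mem_ker, ellMap_apply] at hv
    set fgen : GenTwo → Aff := fun j =>
      match j with
      | GenTwo.a => ⟨x, ξ ga⟩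
      | GenTwo.b => ⟨y, ξ gb⟩ with hfgen
    have hrel : ∀ r ∈ relsTwo, FreeGroup.lift fgen r = 1 := by
      intro r hr
      rw [relsTwo, Set.mem_singleton_iff] at hr
      subst hr
      rw [map_commutatorElement, map_pow, map_pow, FreeGroup.lift_apply_of, FreeGroup.lift_apply_of]
      exact Aff.commutator_sq_eq_one x y (ξ ga) (ξ gb) (by rw [sC, tC] at hv; linear_combination hv)
    set φ : G →* Aff := PresentedGroup.toGroup hrel with hφ
    have phi_u : ∀ g : G, (φ g).u = ξ g := by
      have : Aff.proj.comp φ = ξ := by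
        apply PresentedGroup.ext
        intro j
        cases j <;> simp [hφ, PresentedGroup.toGroup.of, hfgen]
      intro g
      exact DFunLike.congr_fun this g
    have memF : (fun g : G => (φ g).x) ∈ cocycles₁ (charRep ξ) := by
      refine (mem_cocycles₁_iff (A := charRep ξ) _).2 ?_
      intro g h
      show (φ (g * h)).x = (ξ g : ℂ) * (φ h).x + (φ g).x
      rw [map_mul, Aff.mul_x, phi_u]
      ring
    refine ⟨⟨_, memF⟩, ?_⟩
    show (cval ξ ⟨_, memF⟩ ga, cval ξ ⟨_, memF⟩ gb) = (x, y)
    have h1 : (φ ga).x = x := by rw [hφ, PresentedGroup.toGroup.of]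
    have h2 : (φ gb).x = y := by rw [hφ, PresentedGroup.toGroup.of]
    exact Prod.ext h1 h2


instance : FiniteDimensional ℂ (cocycles₁ (charRep ξ)) :=
  FiniteDimensional.of_injective (evalMap ξ) (evalMap_injective ξ)

lemma finrank_cocycles :
    Module.finrank ℂ (cocycles₁ (charRep ξ))
      = Module.finrank ℂ (LinearMap.ker (ellMap ξ)) := by
  rw [← range_evalMap]
  exact ((LinearEquiv.ofInjective (evalMap ξ) (evalMap_injective ξ)).finrank_eq)

lemma finrank_A : Module.finrank ℂ (charRep ξ) = 1 := Module.finrank_self ℂ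

lemma finrank_coboundaries (hξ : ∃ x, ξ x ≠ 1) :
    Module.finrank ℂ (LinearMap.range (shortComplexH1 (charRep ξ)).moduleCatToCycles) = 1 := by
  obtain ⟨g₀, hg₀⟩ := hξ
  have hinj : Function.Injective
      ⇑(shortComplexH1 (charRep ξ)).moduleCatToCycles := by
    intro c d hcd
    have h' : (ξ g₀ : ℂ) * toC ξ c - toC ξ c = (ξ g₀ : ℂ) * toC ξ d - toC ξ d :=
      congrFun (congrArg Subtype.val hcd) g₀
    have hne : (ξ g₀ : ℂ) - 1 ≠ 0 := by
      intro h0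
      exact hg₀ (Units.ext (by push_cast; linear_combination h0))
    have key : ((ξ g₀ : ℂ) - 1) * toC ξ c = ((ξ g₀ : ℂ) - 1) * toC ξ d := by
      linear_combination h'
    show toC ξ c = toC ξ d
    exact mul_left_cancel₀ hne key
  rw [LinearMap.finrank_range_of_inj hinj]
  exact finrank_A ξ

lemma finrank_prod2 : Module.finrank ℂ (ℂ × ℂ) = 2 := by
  rw [Module.finrank_prod, Module.finrank_self]

lemma finrank_ker_of_ne (h : ellMap ξ ≠ 0) :
    Module.finrank ℂ (LinearMap.ker (ellMap ξ)) = 1 := by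
  have hsurj : Function.Surjective (ellMap ξ) := by
    obtain ⟨v, hv⟩ : ∃ v, ellMap ξ v ≠ 0 := by
      by_contra hc
      push_neg at hc
      exact h (LinearMap.ext hc)
    intro z
    refine ⟨(z / ellMap ξ v) • v, ?_⟩
    rw [map_smul, smul_eq_mul, div_mul_cancel₀ _ hv]
  have hr : Module.finrank ℂ (LinearMap.range (ellMap ξ)) = 1 := by
    rw [LinearMap.range_eq_top.2 hsurj, finrank_top, Module.finrank_self]
  have := LinearMap.finrank_range_add_finrank_ker (ellMap ξ)
  rw [hr, finrank_prod2] at this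
  omega

lemma finrank_ker_of_eq (h : ellMap ξ = 0) :
    Module.finrank ℂ (LinearMap.ker (ellMap ξ)) = 2 := by
  rw [h, LinearMap.ker_zero, finrank_top, finrank_prod2]

lemma h1dim_eq (hξ : ∃ x, ξ x ≠ 1) :
    h1dim ξ + 1 = Module.finrank ℂ (LinearMap.ker (ellMap ξ)) := by
  have h0 : h1dim ξ = Module.finrank ℂ ((shortComplexH1 (charRep ξ)).moduleCatLeftHomologyData.H) :=
    (groupCohomology.H1Iso (charRep ξ)).toLinearEquiv.finrank_eq
  haveI : Module.Finite ℂ (LinearMap.ker (shortComplexH1 (charRep ξ)).g.hom) :=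
    inferInstanceAs (FiniteDimensional ℂ (cocycles₁ (charRep ξ)))
  have h1 := Submodule.finrank_quotient_add_finrank
    (LinearMap.range (shortComplexH1 (charRep ξ)).moduleCatToCycles)
  rw [finrank_coboundaries ξ hξ] at h1
  rw [h0, ← finrank_cocycles ξ]
  exact h1

end CVTG


/-- For `G = ⟨a, b ∣ [a², b²] = 1⟩` and a nontrivial character `ξ`, writing
`s = ξ(a)` and `t = ξ(b)`, one has `dim_ℂ H¹(G; ℂ_ξ) = 1` if `s = −1` or
`t = −1`, and `dim_ℂ H¹(G; ℂ_ξ) = 0` otherwise. -/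
theorem char_var_two_gen
    (ξ : PresentedGroup relsTwo →* ℂˣ) (hξ : ∃ x, ξ x ≠ 1) :
    ∀ s t : ℂ, s = (ξ (PresentedGroup.of GenTwo.a) : ℂ) →
      t = (ξ (PresentedGroup.of GenTwo.b) : ℂ) →
      ((s = -1 ∨ t = -1) → h1dim ξ = 1) ∧
      (¬ (s = -1 ∨ t = -1) → h1dim ξ = 0) := by
  intro s t hs ht
  have hsS : CVTG.sC ξ = s := hs.symm
  have htS : CVTG.tC ξ = t := ht.symm
  have hkey := CVTG.h1dim_eq ξ hξ
  constructor
  · intro hcase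
    have hzero : CVTG.ellMap ξ = 0 := by
      have hα : (1 + CVTG.sC ξ) * (1 - CVTG.tC ξ ^ 2) = 0 := by
        rcases hcase with h | h
        · rw [hsS, h]; ring
        · rw [htS, h]; ring
      have hβ : (1 + CVTG.tC ξ) * (CVTG.sC ξ ^ 2 - 1) = 0 := by
        rcases hcase with h | h
        · rw [hsS, h]; ring
        · rw [htS, h]; ring
      apply LinearMap.ext
      rintro ⟨x, y⟩
      rw [CVTG.ellMap_apply, hα, hβ]
      simp
    rw [CVTG.finrank_ker_of_eq ξ hzero] at hkey
    omega
  · intro hcase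
    push_neg at hcase
    obtain ⟨hs1, ht1⟩ := hcase
    rw [← hsS] at hs1
    rw [← htS] at ht1
    have hne : CVTG.ellMap ξ ≠ 0 := by
      intro h0
      have hα : (1 + CVTG.sC ξ) * (1 - CVTG.tC ξ ^ 2) = 0 := by
        have := DFunLike.congr_fun h0 ((1 : ℂ), (0 : ℂ))
        rw [CVTG.ellMap_apply] at this
        simp only [LinearMap.zero_apply] at this
        linear_combination this
      have hβ : (1 + CVTG.tC ξ) * (CVTG.sC ξ ^ 2 - 1) = 0 := by
        have := DFunLike.congr_fun h0 ((0 : ℂ), (1 : ℂ))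
        rw [CVTG.ellMap_apply] at this
        simp only [LinearMap.zero_apply] at this
        linear_combination this
      have hs0 : 1 + CVTG.sC ξ ≠ 0 := fun h => hs1 (by linear_combination h)
      have ht0 : 1 + CVTG.tC ξ ≠ 0 := fun h => ht1 (by linear_combination h)
      have ht2 : CVTG.tC ξ = 1 := by
        have h1 : 1 - CVTG.tC ξ ^ 2 = 0 := by
          rcases mul_eq_zero.1 hα with h | h
          · exact absurd h hs0
          · exact h
        have h2 : (1 - CVTG.tC ξ) * (1 + CVTG.tC ξ) = 0 := by linear_combination h1
        rcases mul_eq_zero.1 h2 with h | h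
        · linear_combination -h
        · exact absurd h ht0
      have hs2 : CVTG.sC ξ = 1 := by
        have h1 : CVTG.sC ξ ^ 2 - 1 = 0 := by
          rcases mul_eq_zero.1 hβ with h | h
          · exact absurd h ht0
          · exact h
        have h2 : (CVTG.sC ξ - 1) * (CVTG.sC ξ + 1) = 0 := by linear_combination h1
        rcases mul_eq_zero.1 h2 with h | h
        · linear_combination h
        · exact absurd (by linear_combination h) hs1
      obtain ⟨g, hg⟩ := hξ
      exact hg (CVTG.xi_eq_one ξ (Units.ext hs2) (Units.ext ht2) g)
    rw [CVTG.finrank_ker_of_ne ξ hne] at hkey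
    omega
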